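/- Suppose a function f : ℝ^d → ℝ is bounded below and has L-Lipschitz gradient, and suppose m ≤ f(x) + c for some m > 0. Then the gradient of l(x) = √(f(x) + c) satisfies: ∇l is Lipschitz on any set where ‖∇f‖ ≤ G and f + c ≥ m, with Lipschitz constant (L/(2√m) + G²/(4 m^{3/2})). -/

import Mathlib

set_option maxHeartbeats 1000000

private lemma aux_ineq {E : Type*} [NormedAddCommGroup E] [NormedSpace ℝ E]
    (a b : E) (A B m G L D : ℝ) (hm : 0 < m) (hA : m ≤ A) (hAB : A ≤ B)
    (hab : ‖a - b‖ ≤ L * D) (ha : ‖a‖ ≤ G)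
    (hδ : B - A ≤ G * D + L * D ^ 2) (hD : 0 ≤ D) (hL : 0 ≤ L) :
    ‖(1/(2*Real.sqrt A)) • a - (1/(2*Real.sqrt B)) • b‖ ≤
      (L / (2 * Real.sqrt m) + G ^ 2 / (4 * (m * Real.sqrt m))) * D := by
  set sm := Real.sqrt m with hsm
  set s := Real.sqrt A with hsdef
  set t := Real.sqrt B with htdef
  set u := Real.sqrt (m + (B - A)) with hudef
  have hδ0 : 0 ≤ B - A := sub_nonneg.mpr hAB
  have hsm0 : 0 < sm := Real.sqrt_pos.mpr hm
  have hs : sm ≤ s := Real.sqrt_le_sqrt hA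
  have hst : s ≤ t := Real.sqrt_le_sqrt hAB
  have hu_t : u ≤ t := Real.sqrt_le_sqrt (by linarith)
  have hsmu : sm ≤ u := Real.sqrt_le_sqrt (by linarith)
  have hs0 : 0 < s := lt_of_lt_of_le hsm0 hs
  have ht0 : 0 < t := lt_of_lt_of_le hs0 hst
  have hu0 : 0 < u := lt_of_lt_of_le hsm0 hsmu
  have hu2 : u ^ 2 = m + (B - A) := Real.sq_sqrt (by linarith)
  have hsm2 : sm ^ 2 = m := Real.sq_sqrt hm.le
  have hs2 : s ^ 2 = A := Real.sq_sqrt (by linarith)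
  have ht2 : t ^ 2 = B := Real.sq_sqrt (by linarith)
  have hG0 : 0 ≤ G := le_trans (norm_nonneg a) ha
  have hLD : 0 ≤ L * D := mul_nonneg hL hD
  have hnn : 0 ≤ 1/(2*s) - 1/(2*t) := by
    have : 1/(2*t) ≤ 1/(2*s) := one_div_le_one_div_of_le (by positivity) (by linarith)
    linarith
  have key : ‖(1/(2*s)) • a - (1/(2*t)) • b‖ ≤ (1/(2*t))*(L*D) + (1/(2*s)-1/(2*t))*G := by
    have hd : (1/(2*s)) • a - (1/(2*t)) • b = (1/(2*t)) • (a-b) + (1/(2*s)-1/(2*t)) • a := by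
      module
    rw [hd]
    refine le_trans (norm_add_le _ _) ?_
    rw [norm_smul, norm_smul, Real.norm_eq_abs, Real.norm_eq_abs,
      abs_of_nonneg (by positivity), abs_of_nonneg hnn]
    gcongr
  refine le_trans key ?_
  -- exact expressions for the differences of inverses
  have e1 : 1/(2*s) - 1/(2*t) = (B - A)/(2*s*t*(s+t)) := by
    have : (1/(2*s) - 1/(2*t)) * (2*s*t*(s+t)) = t^2 - s^2 := by
      field_simp; ring
    rw [eq_div_iff (by positivity), this, hs2, ht2]
  have e2 : 1/(2*sm) - 1/(2*u) = (B - A)/(2*sm*u*(u+sm)) := by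
    have : (1/(2*sm) - 1/(2*u)) * (2*sm*u*(u+sm)) = u^2 - sm^2 := by
      field_simp; ring
    rw [eq_div_iff (by positivity), this, hu2, hsm2]; ring
  have h1 : 1/(2*t) ≤ 1/(2*u) := one_div_le_one_div_of_le (by positivity) (by linarith)
  have a2 : 1/(2*s) - 1/(2*t) ≤ 1/(2*sm) - 1/(2*u) := by
    rw [e1, e2]
    apply div_le_div_of_nonneg_left hδ0 (by positivity)
    nlinarith [mul_le_mul hs hu_t hu0.le hs0.le, mul_pos hs0 ht0, mul_pos hsm0 hu0]
  have step1 : (1/(2*t))*(L*D) + (1/(2*s)-1/(2*t))*G ≤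
      (1/(2*u))*(L*D) + (1/(2*sm)-1/(2*u))*G := by
    have a1 : (1/(2*t))*(L*D) ≤ (1/(2*u))*(L*D) := mul_le_mul_of_nonneg_right h1 hLD
    have a2' : (1/(2*s)-1/(2*t))*G ≤ (1/(2*sm)-1/(2*u))*G := mul_le_mul_of_nonneg_right a2 hG0
    linarith
  refine le_trans step1 ?_
  have hp0 : 0 ≤ 1/(2*sm) - 1/(2*u) := by
    have : 1/(2*u) ≤ 1/(2*sm) := one_div_le_one_div_of_le (by positivity) (by linarith)
    linarith
  have hpbound : 1/(2*sm) - 1/(2*u) ≤ (B - A)/(4*(m*sm)) := by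
    rw [e2]
    apply div_le_div_of_nonneg_left hδ0 (by positivity)
    nlinarith [mul_pos hsm0 hu0, mul_le_mul hsmu hsmu hsm0.le hu0.le]
  have erhs : (L / (2 * sm) + G ^ 2 / (4 * (m * sm))) * D
      = (1/(2*sm))*(L*D) + (G^2*D)/(4*(m*sm)) := by ring
  rcases le_or_gt G (L*D) with hcase | hcase
  · have h3 : (1/(2*sm) - 1/(2*u))*G ≤ (1/(2*sm) - 1/(2*u))*(L*D) :=
      mul_le_mul_of_nonneg_left hcase hp0
    have h4 : (1/(2*u))*(L*D) + (1/(2*sm) - 1/(2*u))*(L*D) = (1/(2*sm))*(L*D) := by ring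
    have h5 : 0 ≤ (G^2*D)/(4*(m*sm)) := by positivity
    linarith
  · have hGL : 0 ≤ G - L*D := by linarith
    have k1 : (G - L*D)*(1/(2*sm) - 1/(2*u)) ≤ (G - L*D)*((B-A)/(4*(m*sm))) :=
      mul_le_mul_of_nonneg_left hpbound hGL
    have k2 : (G - L*D)*((B-A)/(4*(m*sm))) ≤ (G - L*D)*((G*D + L*D^2)/(4*(m*sm))) := by
      apply mul_le_mul_of_nonneg_left _ hGL
      exact div_le_div_of_nonneg_right hδ (by positivity)
    have k3 : (G - L*D)*((G*D + L*D^2)/(4*(m*sm))) ≤ (G^2*D)/(4*(m*sm)) := by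
      rw [mul_div_assoc']
      refine div_le_div_of_nonneg_right ?_ (by positivity)
      nlinarith [mul_nonneg (mul_nonneg hL hL) (mul_nonneg (mul_nonneg hD hD) hD)]
    have e6 : (1/(2*u))*(L*D) + (1/(2*sm) - 1/(2*u))*G
        = (1/(2*sm))*(L*D) + (G - L*D)*(1/(2*sm) - 1/(2*u)) := by ring
    linarith



theorem surrogate_gradient_lipschitz {d : ℕ} (f : EuclideanSpace ℝ (Fin d) → ℝ)
    (X : Set (EuclideanSpace ℝ (Fin d))) (c m G L : ℝ)
    (hc : 0 < c) (hm : 0 < m)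
    (hdiff : Differentiable ℝ f)
    (hbdd : ∃ B, ∀ x, B ≤ f x)
    (hLip : ∀ x y, ‖gradient f x - gradient f y‖ ≤ L * ‖x - y‖)
    (hG : ∀ x ∈ X, ‖gradient f x‖ ≤ G)
    (hlow : ∀ x ∈ X, m ≤ f x + c)
    (l : EuclideanSpace ℝ (Fin d) → ℝ) (hl : l = fun x => Real.sqrt (f x + c)) :
    ∀ x ∈ X, ∀ y ∈ X,
      ‖gradient l x - gradient l y‖ ≤
        (L / (2 * Real.sqrt m) + G ^ 2 / (4 * (m * Real.sqrt m))) * ‖x - y‖ := by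
  intro x hx y hy
  by_cases hxy : x = y
  · subst hxy; simp
  have hxy' : 0 < ‖x - y‖ := by
    rw [norm_pos_iff]; exact sub_ne_zero_of_ne hxy
  have hL : 0 ≤ L := by
    have h0 := hLip x y
    nlinarith [norm_nonneg (gradient f x - gradient f y)]
  -- fderiv in terms of gradient
  have etd : ∀ w, (InnerProductSpace.toDual ℝ (EuclideanSpace ℝ (Fin d))) (gradient f w)
      = fderiv ℝ f w := fun w =>
    (InnerProductSpace.toDual ℝ (EuclideanSpace ℝ (Fin d))).apply_symm_apply _
  -- descent bound
  have hdesc : ∀ p ∈ X, ∀ q : EuclideanSpace ℝ (Fin d),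
      f q - f p ≤ G * ‖q - p‖ + L * ‖q - p‖ ^ 2 := by
    intro p hp q
    have hmv : ‖f q - f p - (fderiv ℝ f p) (q - p)‖ ≤ (L * ‖q - p‖) * ‖q - p‖ := by
      apply Convex.norm_image_sub_le_of_norm_hasFDerivWithin_le'
        (f' := fun z => fderiv ℝ f z)
        (fun z _ => (hdiff z).hasFDerivAt.hasFDerivWithinAt) ?_
        (convex_segment p q) (left_mem_segment ℝ p q) (right_mem_segment ℝ p q)
      intro z hz
      have hzn : ‖z - p‖ ≤ ‖q - p‖ := by
        obtain ⟨a, b, ha, hb, hab, rfl⟩ := hz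
        have hz' : a • p + b • q - p = b • (q - p) := by
          have h1 : a • p + b • q - p = b • (q - p) + (a + b - 1) • p := by module
          rw [h1, hab]; simp
        rw [hz', norm_smul, Real.norm_eq_abs, abs_of_nonneg hb]
        exact mul_le_of_le_one_left (norm_nonneg _) (by linarith)
      calc ‖fderiv ℝ f z - fderiv ℝ f p‖
          = ‖gradient f z - gradient f p‖ := by
            rw [← etd z, ← etd p, ← map_sub, LinearIsometryEquiv.norm_map]
        _ ≤ L * ‖z - p‖ := hLip z p
        _ ≤ L * ‖q - p‖ := by apply mul_le_mul_of_nonneg_left hzn hL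
    have hinner : (fderiv ℝ f p) (q - p) ≤ G * ‖q - p‖ := by
      rw [← etd p, InnerProductSpace.toDual_apply_apply]
      calc inner ℝ (gradient f p) (q - p) ≤ ‖gradient f p‖ * ‖q - p‖ := real_inner_le_norm _ _
        _ ≤ G * ‖q - p‖ := mul_le_mul_of_nonneg_right (hG p hp) (norm_nonneg _)
    have habs : |f q - f p - (fderiv ℝ f p) (q - p)| ≤ L * ‖q - p‖ * ‖q - p‖ := by
      rw [← Real.norm_eq_abs]; linarith [hmv]
    have hsq : ‖q - p‖ ^ 2 = ‖q - p‖ * ‖q - p‖ := sq ‖q - p‖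
    have h2 := (abs_le.mp habs).2
    nlinarith [hinner]
  -- gradient formula for l
  have hgl : ∀ w : EuclideanSpace ℝ (Fin d), w ∈ X →
      gradient l w = (1/(2*Real.sqrt (f w + c))) • gradient f w := by
    intro w hw
    have hpos : 0 < f w + c := lt_of_lt_of_le hm (hlow w hw)
    have h1 : HasDerivAt Real.sqrt (1/(2*Real.sqrt (f w + c))) (f w + c) :=
      Real.hasDerivAt_sqrt (ne_of_gt hpos)
    have h2 : HasFDerivAt (fun z => f z + c) (fderiv ℝ f w) w :=
      (hdiff w).hasFDerivAt.add_const c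
    have h3 : HasFDerivAt l ((1/(2*Real.sqrt (f w + c))) • fderiv ℝ f w) w := by
      rw [hl]; exact h1.comp_hasFDerivAt w h2
    show (InnerProductSpace.toDual ℝ (EuclideanSpace ℝ (Fin d))).symm (fderiv ℝ l w) = _
    rw [h3.fderiv, map_smul, ← etd w,
      (InnerProductSpace.toDual ℝ (EuclideanSpace ℝ (Fin d))).symm_apply_apply]
  rw [hgl x hx, hgl y hy]
  have hAx : m ≤ f x + c := hlow x hx
  have hAy : m ≤ f y + c := hlow y hy
  rcases le_total (f x + c) (f y + c) with hAB | hAB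
  · have hδ : (f y + c) - (f x + c) ≤ G * ‖x - y‖ + L * ‖x - y‖ ^ 2 := by
      have := hdesc x hx y
      rw [show (y - x : EuclideanSpace ℝ (Fin d)) = -(x - y) by abel, norm_neg] at this
      linarith
    exact aux_ineq (gradient f x) (gradient f y) (f x + c) (f y + c) m G L ‖x - y‖
      hm hAx hAB (hLip x y) (hG x hx) hδ (norm_nonneg _) hL
  · have hδ : (f x + c) - (f y + c) ≤ G * ‖x - y‖ + L * ‖x - y‖ ^ 2 := by
      have := hdesc y hy x
      linarith
    rw [norm_sub_rev]
    have hab : ‖gradient f y - gradient f x‖ ≤ L * ‖x - y‖ := by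
      rw [norm_sub_rev]; exact hLip x y
    exact aux_ineq (gradient f y) (gradient f x) (f y + c) (f x + c) m G L ‖x - y‖
      hm hAy hAB hab (hG y hy) hδ (norm_nonneg _) hL
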